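/- Let n ≥ 1, let γ ∈ ℂ be a primitive n-th root of unity, and let s, t be n × n unitary matrices with s t s⁻¹ t⁻¹ = γ · I_n. Suppose w is a traceless skew-Hermitian n × n matrix (wᴴ = −w, trace(w) = 0) such that for all skew-Hermitian matrices x and y, trace(w · (x t s⁻¹ t⁻¹ + s y s⁻¹ t⁻¹ − s t s⁻¹ x s⁻¹ t⁻¹ − s t s⁻¹ t⁻¹ y t⁻¹)) = 0. Then w = 0. (This expresses that γ · I_n is a regular value of the commutator map μ(s,t) = [s,t] from U_n × U_n to SU_n.) -/

import Mathlib

open Matrix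

lemma eq_zero_of_trace_skew {n : ℕ} (A : Matrix (Fin n) (Fin n) ℂ)
    (h : ∀ x : Matrix (Fin n) (Fin n) ℂ, xᴴ = -x → (A * x).trace = 0) : A = 0 := by
  have hall : ∀ B : Matrix (Fin n) (Fin n) ℂ, (A * B).trace = 0 := by
    intro B
    have h1 := h (B - Bᴴ) (by rw [conjTranspose_sub, conjTranspose_conjTranspose, neg_sub])
    have h2 := h (Complex.I • (B + Bᴴ))
      (by rw [conjTranspose_smul, conjTranspose_add, conjTranspose_conjTranspose]
          simp [Complex.conj_I, add_comm, neg_smul])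
    rw [mul_sub, trace_sub, sub_eq_zero] at h1
    rw [Matrix.mul_smul, trace_smul, smul_eq_zero] at h2
    rcases h2 with h2 | h2
    · exact absurd h2 Complex.I_ne_zero
    · rw [mul_add, trace_add, h1] at h2
      have h4 : (2 : ℂ) * (A * Bᴴ).trace = 0 := by linear_combination h2
      rcases mul_eq_zero.mp h4 with h3 | h3
      · norm_num at h3
      · rw [← h1] at h3; exact h3
  ext i j
  have h5 := hall (Matrix.single j i 1)
  have h6 : (A * Matrix.single j i 1).trace = A i j := by
    rw [Matrix.trace]
    rw [Finset.sum_eq_single i]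
    · simp [Matrix.diag, Matrix.mul_apply, Matrix.single, Finset.sum_ite_eq]
    · intro b _ hb
      simp [Matrix.diag, Matrix.mul_apply, Matrix.single, hb.symm]
    · simp
  rw [h6] at h5; simpa using h5

/-- **`γ·I_n` is a regular value of the commutator map `μ : U_n × U_n → SU_n`.**
Let `γ ∈ ℂ` be a primitive `n`-th root of unity, and let `s, t` be unitary `n × n`
matrices with `s t s⁻¹ t⁻¹ = γ • I_n`.  If `w` is a traceless skew-Hermitian matrix that
is trace-orthogonal to the image of the differential of `μ` at `(s,t)`, i.e.
`trace(w · (x t s⁻¹ t⁻¹ + s y s⁻¹ t⁻¹ - s t s⁻¹ x s⁻¹ t⁻¹ - s t s⁻¹ t⁻¹ y t⁻¹)) = 0`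
for all skew-Hermitian `x, y`, then `w = 0`. -/
theorem regular_value_of_commutator_map
    (n : ℕ) (hn : 1 ≤ n) (γ : ℂ)
    (hγ : γ ^ n = 1 ∧ ∀ m : ℕ, 0 < m → m < n → γ ^ m ≠ 1)
    (s t : Matrix (Fin n) (Fin n) ℂ)
    (hs : sᴴ * s = 1) (ht : tᴴ * t = 1)
    (hst : s * t * s⁻¹ * t⁻¹ = γ • (1 : Matrix (Fin n) (Fin n) ℂ))
    (w : Matrix (Fin n) (Fin n) ℂ)
    (hw : wᴴ = -w) (hwtr : w.trace = 0)
    (horth : ∀ x y : Matrix (Fin n) (Fin n) ℂ, xᴴ = -x → yᴴ = -y →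
      (w * (x * t * s⁻¹ * t⁻¹ + s * y * s⁻¹ * t⁻¹
            - s * t * s⁻¹ * x * s⁻¹ * t⁻¹ - s * t * s⁻¹ * t⁻¹ * y * t⁻¹)).trace = 0) :
    w = 0 := by
  -- basic invertibility facts
  have hsi : s⁻¹ = sᴴ := Matrix.inv_eq_left_inv hs
  have hti : t⁻¹ = tᴴ := Matrix.inv_eq_left_inv ht
  have hs1 : s⁻¹ * s = 1 := by rw [hsi]; exact hs
  have hs2 : s * s⁻¹ = 1 := by rw [hsi]; exact mul_eq_one_comm.mp hs
  have ht1 : t⁻¹ * t = 1 := by rw [hti]; exact ht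
  have ht2 : t * t⁻¹ = 1 := by rw [hti]; exact mul_eq_one_comm.mp ht
  have hγ0 : γ ≠ 0 := by
    intro h0
    have := hγ.1
    rw [h0, zero_pow (by omega)] at this
    exact zero_ne_one this
  -- consequences of hst
  have hts : s * t * s⁻¹ = γ • t := by
    have := congrArg (· * t) hst
    simpa [Matrix.mul_assoc, ht1, Matrix.smul_mul] using this
  have hst2 : t * s⁻¹ * t⁻¹ = γ • s⁻¹ := by
    have := congrArg (s⁻¹ * ·) hst
    simpa [← Matrix.mul_assoc, hs1, Matrix.mul_smul] using this
  have hstc : s * t = γ • (t * s) := by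
    have := congrArg (· * s) hts
    simpa [Matrix.mul_assoc, hs1, Matrix.smul_mul] using this
  -- commutation of w with t
  have hA : t * s⁻¹ * t⁻¹ * w - s⁻¹ * t⁻¹ * w * (s * t * s⁻¹) = 0 := by
    apply eq_zero_of_trace_skew
    intro x hx
    have h0 := horth x 0 hx (by simp)
    simp only [Matrix.mul_zero, Matrix.zero_mul, add_zero, sub_zero] at h0
    have e1 : (w * (x * t * s⁻¹ * t⁻¹)).trace = ((t * s⁻¹ * t⁻¹ * w) * x).trace := by
      rw [show (t * s⁻¹ * t⁻¹ * w) * x = (t * s⁻¹ * t⁻¹) * (w * x) by noncomm_ring,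
        Matrix.trace_mul_comm (t * s⁻¹ * t⁻¹)]
      congr 1; noncomm_ring
    have e2 : (w * (s * t * s⁻¹ * x * s⁻¹ * t⁻¹)).trace
        = ((s⁻¹ * t⁻¹ * w * (s * t * s⁻¹)) * x).trace := by
      rw [show (s⁻¹ * t⁻¹ * w * (s * t * s⁻¹)) * x = (s⁻¹ * t⁻¹) * (w * (s * t * s⁻¹) * x)
          by noncomm_ring,
        Matrix.trace_mul_comm (s⁻¹ * t⁻¹)]
      congr 1; noncomm_ring
    rw [Matrix.sub_mul, trace_sub, ← e1, ← e2, ← trace_sub, ← Matrix.mul_sub]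
    exact h0
  have hwt : t * w = w * t := by
    rw [sub_eq_zero, hst2, hts, Matrix.smul_mul, Matrix.mul_smul] at hA
    have h1 : s⁻¹ * w = s⁻¹ * t⁻¹ * w * t := smul_right_injective _ hγ0 hA
    have h2 := congrArg (fun M => t * (s * M)) h1
    simpa [← Matrix.mul_assoc, Matrix.mul_assoc t, hs2, ht2,
      show t * (s * (s⁻¹ * t⁻¹ * w * t)) = (t * ((s * s⁻¹) * t⁻¹)) * w * t by noncomm_ring,
      show t * (s * (s⁻¹ * w)) = t * (s * s⁻¹) * w by noncomm_ring] using h2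
  have hB : s⁻¹ * t⁻¹ * w * s - γ • (t⁻¹ * w) = 0 := by
    apply eq_zero_of_trace_skew
    intro y hy
    have h0 := horth 0 y (by simp) hy
    simp only [Matrix.mul_zero, Matrix.zero_mul, zero_add, zero_sub,
      sub_eq_add_neg, neg_add_rev] at h0
    rw [hst] at h0
    have h0' : (w * (s * y * s⁻¹ * t⁻¹) - w * (γ • (y * t⁻¹))).trace = 0 := by
      rw [← h0]; congr 1; rw [← Matrix.mul_sub]; congr 1
      rw [Matrix.smul_mul, Matrix.smul_mul, Matrix.one_mul]
      noncomm_ring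
    have e3 : (w * (s * y * s⁻¹ * t⁻¹)).trace = ((s⁻¹ * t⁻¹ * w * s) * y).trace := by
      rw [show (s⁻¹ * t⁻¹ * w * s) * y = (s⁻¹ * t⁻¹) * (w * s * y) by noncomm_ring,
        Matrix.trace_mul_comm (s⁻¹ * t⁻¹)]
      congr 1; noncomm_ring
    have e4 : (w * (γ • (y * t⁻¹))).trace = ((γ • (t⁻¹ * w)) * y).trace := by
      rw [Matrix.mul_smul, Matrix.smul_mul, trace_smul, trace_smul]
      congr 1
      rw [show t⁻¹ * w * y = t⁻¹ * (w * y) by noncomm_ring, Matrix.trace_mul_comm t⁻¹]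
      congr 1; noncomm_ring
    rw [Matrix.sub_mul, trace_sub, ← e3, ← e4, ← trace_sub]
    exact h0'
  have hws : s * w = w * s := by
    rw [sub_eq_zero] at hB
    have h2 := congrArg (fun M => t * (s * M)) hB
    have h3 : w * s = γ • (t * (s * (t⁻¹ * w))) := by
      simpa [show t * (s * (s⁻¹ * t⁻¹ * w * s)) = (t * (s * s⁻¹) * t⁻¹) * w * s
          by noncomm_ring, hs2, ht2, Matrix.mul_smul] using h2
    have h4 : t * s = γ⁻¹ • (s * t) := by
      rw [hstc, smul_smul, inv_mul_cancel₀ hγ0, one_smul]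
    rw [show t * (s * (t⁻¹ * w)) = (t * s) * t⁻¹ * w by noncomm_ring, h4] at h3
    rw [h3, Matrix.smul_mul, Matrix.smul_mul, smul_smul, mul_inv_cancel₀ hγ0, one_smul,
      show s * t * t⁻¹ * w = s * (t * t⁻¹) * w by noncomm_ring, ht2, Matrix.mul_one]
  -- Part 2: eigenspace argument
  classical
  haveI : Nonempty (Fin n) := ⟨⟨0, hn⟩⟩
  obtain ⟨lam, hlam⟩ := Module.End.exists_eigenvalue (Matrix.mulVecLin w)
  set E := Module.End.eigenspace (Matrix.mulVecLin w) lam with hE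
  have hmemE : ∀ z : Fin n → ℂ, z ∈ E ↔ w.mulVec z = lam • z := by
    intro z
    rw [hE, Module.End.mem_eigenspace_iff, Matrix.mulVecLin_apply]
  -- E is invariant under s and t
  have hsE : ∀ z ∈ E, s.mulVec z ∈ E := by
    intro z hz
    rw [hmemE] at hz ⊢
    rw [Matrix.mulVec_mulVec, ← hws, ← Matrix.mulVec_mulVec, hz, Matrix.mulVec_smul]
  -- eigenvector of s inside E
  haveI : Nontrivial E := Submodule.nontrivial_iff_ne_bot.mpr hlam
  have hsE' : ∀ z ∈ E, s.mulVecLin z ∈ E := by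
    intro z hz; rw [Matrix.mulVecLin_apply]; exact hsE z hz
  obtain ⟨μ, hμ⟩ := Module.End.exists_eigenvalue (LinearMap.restrict s.mulVecLin hsE')
  obtain ⟨u, hu⟩ := hμ.exists_hasEigenvector
  set v : Fin n → ℂ := (u : Fin n → ℂ) with hv
  have hvE : v ∈ E := u.2
  have hv0 : v ≠ 0 := by
    intro h0
    exact hu.2 (Subtype.ext h0)
  have hsv : s.mulVec v = μ • v := by
    have h1 := congrArg Subtype.val hu.apply_eq_smul
    rw [LinearMap.restrict_coe_apply] at h1
    simpa [Matrix.mulVecLin_apply] using h1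
  have hμ0 : μ ≠ 0 := by
    intro h0
    apply hv0
    have h1 : s.mulVec v = 0 := by rw [hsv, h0, zero_smul]
    have h2 : s⁻¹.mulVec (s.mulVec v) = 0 := by rw [h1, Matrix.mulVec_zero]
    rwa [Matrix.mulVec_mulVec, hs1, Matrix.one_mulVec] at h2
  -- the vectors t^k v
  have hpow : ∀ k : ℕ, s * t ^ k = γ ^ k • (t ^ k * s) := by
    intro k
    induction k with
    | zero => simp
    | succ k ih =>
      rw [pow_succ, ← Matrix.mul_assoc, ih, Matrix.smul_mul, Matrix.mul_assoc, hstc,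
        Matrix.mul_smul, smul_smul, ← pow_succ, ← Matrix.mul_assoc, ← pow_succ]
  have hwpow : ∀ k : ℕ, w * t ^ k = t ^ k * w := by
    intro k
    induction k with
    | zero => simp
    | succ k ih =>
      rw [pow_succ, ← Matrix.mul_assoc, ih, Matrix.mul_assoc, ← hwt, ← Matrix.mul_assoc,
        ← pow_succ]
  have htk0 : ∀ (k : ℕ) (z : Fin n → ℂ), (t ^ k).mulVec z = 0 → z = 0 := by
    intro k z hz
    have hc : Commute t⁻¹ t := by unfold Commute SemiconjBy; rw [ht1, ht2]
    have hinvk : t⁻¹ ^ k * t ^ k = 1 := by rw [← hc.mul_pow, ht1, one_pow]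
    have h2 : (t⁻¹ ^ k).mulVec ((t ^ k).mulVec z) = 0 := by rw [hz, Matrix.mulVec_zero]
    rwa [Matrix.mulVec_mulVec, hinvk, Matrix.one_mulVec] at h2
  set vk : Fin n → (Fin n → ℂ) := fun k => (t ^ (k : ℕ)).mulVec v with hvk
  have heig : ∀ k : Fin n,
      Module.End.HasEigenvector (Matrix.mulVecLin s) (γ ^ (k : ℕ) * μ) (vk k) := by
    intro k
    constructor
    · rw [Module.End.mem_eigenspace_iff, Matrix.mulVecLin_apply, hvk]
      rw [Matrix.mulVec_mulVec, hpow, Matrix.smul_mulVec, ← Matrix.mulVec_mulVec,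
        hsv, Matrix.mulVec_smul, smul_smul]
    · intro h0
      exact hv0 (htk0 _ _ h0)
  have hinj : Function.Injective (fun k : Fin n => γ ^ (k : ℕ) * μ) := by
    have key : ∀ a b : Fin n, (a : ℕ) < (b : ℕ) → γ ^ (a : ℕ) ≠ γ ^ (b : ℕ) := by
      intro a b hab h
      have hd : (b : ℕ) = (a : ℕ) + ((b : ℕ) - (a : ℕ)) := by omega
      rw [hd, pow_add] at h
      have h' : γ ^ (a : ℕ) * 1 = γ ^ (a : ℕ) * γ ^ ((b : ℕ) - (a : ℕ)) := by
        rw [mul_one]; exact h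
      have h1 : γ ^ ((b : ℕ) - (a : ℕ)) = 1 :=
        (mul_left_cancel₀ (pow_ne_zero _ hγ0) h').symm
      exact hγ.2 _ (by omega) (by omega) h1
    intro a b hab
    simp only at hab
    have h2 : γ ^ (a : ℕ) = γ ^ (b : ℕ) := mul_right_cancel₀ hμ0 hab
    rcases lt_trichotomy (a : ℕ) (b : ℕ) with h | h | h
    · exact absurd h2 (key a b h)
    · exact Fin.ext h
    · exact absurd h2.symm (key b a h)
  have hli : LinearIndependent ℂ vk :=
    Module.End.eigenvectors_linearIndependent' (Matrix.mulVecLin s)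
      (fun k : Fin n => γ ^ (k : ℕ) * μ) hinj vk heig
  have hvkE : ∀ k : Fin n, vk k ∈ E := by
    intro k
    rw [hmemE, hvk]
    rw [Matrix.mulVec_mulVec, hwpow, ← Matrix.mulVec_mulVec, (hmemE v).mp hvE,
      Matrix.mulVec_smul]
  -- E has dimension ≥ n, hence is everything
  have hli' : LinearIndependent ℂ (fun k : Fin n => (⟨vk k, hvkE k⟩ : E)) :=
    LinearIndependent.of_comp E.subtype hli
  have hge : n ≤ Module.finrank ℂ E := by
    simpa using hli'.fintype_card_le_finrank
  have hEtop : E = ⊤ := by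
    apply Submodule.eq_top_of_finrank_eq
    have hle : Module.finrank ℂ E ≤ Module.finrank ℂ (Fin n → ℂ) := E.finrank_le
    have hfr : Module.finrank ℂ (Fin n → ℂ) = n := Module.finrank_fin_fun ℂ
    omega
  -- hence w = lam • 1, and lam = 0
  have hwall : ∀ z : Fin n → ℂ, w.mulVec z = lam • z := by
    intro z
    exact (hmemE z).mp (hEtop ▸ Submodule.mem_top)
  have hwl : w = lam • (1 : Matrix (Fin n) (Fin n) ℂ) := by
    ext i j
    have h1 := congrFun (hwall (Pi.single j 1)) i
    simpa [Matrix.one_apply, Pi.single_apply, eq_comm] using h1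
  have hlam : lam = 0 := by
    rw [hwl, trace_smul, trace_one] at hwtr
    simp only [smul_eq_mul] at hwtr
    rcases mul_eq_zero.mp hwtr with h | h
    · exact h
    · exfalso
      have : (n : ℂ) ≠ 0 := Nat.cast_ne_zero.mpr (by omega)
      simp [Fintype.card_fin] at h
      omega
  rw [hwl, hlam, zero_smul]
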